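/- Let g : ℝ^d → ℝ^d be continuously differentiable and suppose there exist θ0 > 0 and θ1, θ2 ≥ 0 such that ⟨u, ∇_u g(x)⟩ ≤ −θ0(1 + θ1|x|^{θ2})|u|² for all u, x ∈ ℝ^d. Then for every x ∈ ℝ^d, ⟨x, g(x) − g(0)⟩ ≤ −θ0(|x|² + θ1|x|^{2+θ2}/(1+θ2)). -/

import Mathlib

open scoped RealInnerProductSpace

theorem stmt0 (d : ℕ) (hd : 1 ≤ d)
    (g : EuclideanSpace ℝ (Fin d) → EuclideanSpace ℝ (Fin d))
    (hg : ContDiff ℝ 1 g)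
    (θ0 θ1 θ2 : ℝ) (hθ0 : 0 < θ0) (hθ1 : 0 ≤ θ1) (hθ2 : 0 ≤ θ2)
    (hdrift : ∀ u x : EuclideanSpace ℝ (Fin d),
      ⟪u, fderiv ℝ g x u⟫ ≤ -θ0 * (1 + θ1 * ‖x‖ ^ θ2) * ‖u‖ ^ 2) :
    ∀ x : EuclideanSpace ℝ (Fin d),
      ⟪x, g x - g 0⟫ ≤ -θ0 * (‖x‖ ^ 2 + θ1 * ‖x‖ ^ (2 + θ2) / (1 + θ2)) := by
  intro x
  have hgd : Differentiable ℝ g := hg.differentiable one_ne_zero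
  -- derivative of φ t = ⟪x, g (t • x)⟫
  set f : ℝ → ℝ := fun t => ⟪x, (fderiv ℝ g (t • x)) x⟫ with hf
  have hderiv : ∀ t : ℝ, HasDerivAt (fun s : ℝ => ⟪x, g (s • x)⟫) (f t) t := by
    intro t
    have h1 : HasDerivAt (fun s : ℝ => s • x) x t := by
      simpa using (hasDerivAt_id t).smul_const x
    have h2 : HasDerivAt (fun s : ℝ => g (s • x)) ((fderiv ℝ g (t • x)) x) t :=
      ((hgd (t • x)).hasFDerivAt).comp_hasDerivAt t h1
    have h3 := ((innerSL ℝ x).hasFDerivAt).comp_hasDerivAt t h2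
    exact h3
  have hcont : Continuous f := by
    have : Continuous (fderiv ℝ g) := hg.continuous_fderiv one_ne_zero
    exact (innerSL ℝ x).continuous.comp
      ((ContinuousLinearMap.apply ℝ _ x).continuous.comp
        (this.comp (continuous_id.smul continuous_const)))
  have hint : IntervalIntegrable f MeasureTheory.volume 0 1 :=
    hcont.intervalIntegrable 0 1
  have hFTC : ⟪x, g x - g 0⟫ = ∫ t in (0:ℝ)..1, f t := by
    have := intervalIntegral.integral_eq_sub_of_hasDerivAt
      (f := fun s : ℝ => ⟪x, g (s • x)⟫) (f' := f)
      (fun t _ => hderiv t) hint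
    rw [this]
    simp [inner_sub_right]
  -- comparison function
  set ψ : ℝ → ℝ := fun t => -θ0 * ‖x‖ ^ 2 + (-θ0 * θ1 * ‖x‖ ^ θ2 * ‖x‖ ^ 2) * t ^ θ2
    with hψ
  have hψint : IntervalIntegrable ψ MeasureTheory.volume 0 1 := by
    apply IntervalIntegrable.add
    · exact intervalIntegrable_const
    · exact (intervalIntegral.intervalIntegrable_rpow'
        (by linarith : (-1:ℝ) < θ2)).const_mul _
  have hbound : ∀ t ∈ Set.Icc (0:ℝ) 1, f t ≤ ψ t := by
    intro t ht
    have ht0 : 0 ≤ t := ht.1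
    have hnorm : ‖t • x‖ ^ θ2 = t ^ θ2 * ‖x‖ ^ θ2 := by
      rw [norm_smul, Real.norm_eq_abs, abs_of_nonneg ht0,
        Real.mul_rpow ht0 (norm_nonneg x)]
    have := hdrift x (t • x)
    rw [hnorm] at this
    calc f t ≤ -θ0 * (1 + θ1 * (t ^ θ2 * ‖x‖ ^ θ2)) * ‖x‖ ^ 2 := this
      _ = ψ t := by ring
  have hmono : ∫ t in (0:ℝ)..1, f t ≤ ∫ t in (0:ℝ)..1, ψ t :=
    intervalIntegral.integral_mono_on (by norm_num) hint hψint hbound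
  have hψval : ∫ t in (0:ℝ)..1, ψ t
      = -θ0 * ‖x‖ ^ 2 + (-θ0 * θ1 * ‖x‖ ^ θ2 * ‖x‖ ^ 2) * (1 / (θ2 + 1)) := by
    rw [hψ]
    rw [intervalIntegral.integral_add intervalIntegrable_const
      ((intervalIntegral.intervalIntegrable_rpow'
        (by linarith : (-1:ℝ) < θ2)).const_mul _)]
    rw [intervalIntegral.integral_const,
      intervalIntegral.integral_const_mul,
      integral_rpow (Or.inl (by linarith : (-1:ℝ) < θ2))]
    have h1 : (1:ℝ) ^ (θ2 + 1) = 1 := Real.one_rpow _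
    have h0 : (0:ℝ) ^ (θ2 + 1) = 0 := Real.zero_rpow (by linarith)
    rw [h1, h0]
    simp only [smul_eq_mul]
    ring
  have hsplit : ‖x‖ ^ (2 + θ2) = ‖x‖ ^ 2 * ‖x‖ ^ θ2 := by
    rcases eq_or_lt_of_le (norm_nonneg x) with h | h
    · rw [← h]
      rw [Real.zero_rpow (by linarith : (2:ℝ) + θ2 ≠ 0)]
      norm_num
    · rw [Real.rpow_add h, Real.rpow_two, sq]
  have h1θ2 : (1:ℝ) + θ2 ≠ 0 := by linarith
  rw [hFTC]
  calc ∫ t in (0:ℝ)..1, f t ≤ ∫ t in (0:ℝ)..1, ψ t := hmono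
    _ = -θ0 * (‖x‖ ^ 2 + θ1 * ‖x‖ ^ (2 + θ2) / (1 + θ2)) := by
        rw [hψval, hsplit]; field_simp; ring
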